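/- Let G = N ⋊_φ H be a semidirect product with N and H finite abelian groups, ℓ a prime. Suppose that for every h ∈ H of order ℓ, φ(h) restricts to the identity on the Sylow ℓ-subgroup of N only if φ(h) is the identity on all of N. Then the pair G/H (H embedded canonically) is ℓ-divisible with δ_ℓ(G/H) ≤ 2. -/
import Mathlib


def LDiv (ℓ : ℕ) {G : Type*} [Group G] (H : Subgroup G) (δ : ℕ) : Prop :=
  ∃ Gs : Fin δ → Subgroup G,
    (∀ i, H ≤ Gs i) ∧
    ∀ σ : G, σ ∉ H → orderOf σ = ℓ →
      ∃ i : Fin δ, ∃ τ : G, IsConj σ τ ∧ τ ∈ Gs i ∧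
        ∀ π ∈ Gs i, π * τ * π⁻¹ ∉ H

namespace Stmt18Aux

open Finset SemidirectProduct

/-- The subgroup of `ℓ`-power torsion elements of a commutative group. -/
def pTor (ℓ : ℕ) (N : Type*) [CommGroup N] : Subgroup N where
  carrier := {x | ∃ m : ℕ, x ^ ℓ ^ m = 1}
  one_mem' := ⟨0, one_pow _⟩
  mul_mem' := by
    rintro x y ⟨i, hi⟩ ⟨j, hj⟩
    refine ⟨i + j, ?_⟩
    rw [mul_pow, pow_add, pow_mul, hi, one_pow, one_mul, mul_comm (ℓ ^ i), pow_mul, hj, one_pow]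
  inv_mem' := by
    rintro x ⟨i, hi⟩
    exact ⟨i, by rw [inv_pow, hi, inv_one]⟩

lemma mem_pTor {N : Type*} [CommGroup N] {ℓ : ℕ} {x : N} :
    x ∈ pTor ℓ N ↔ ∃ m : ℕ, x ^ ℓ ^ m = 1 := Iff.rfl

variable {N H : Type*} [CommGroup N] [CommGroup H]

/-- The subgroup of `ℓ`-power torsion elements fixed by every `ℓ`-power torsion element of `H`. -/
def pFix (ℓ : ℕ) (φ : H →* MulAut N) : Subgroup N where
  carrier := {x | x ∈ pTor ℓ N ∧ ∀ k : H, (∃ j : ℕ, k ^ ℓ ^ j = 1) → φ k x = x}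
  one_mem' := ⟨(pTor ℓ N).one_mem, fun k _ => map_one (φ k)⟩
  mul_mem' := by
    rintro x y ⟨hx, hx2⟩ ⟨hy, hy2⟩
    exact ⟨mul_mem hx hy, fun k hk => by rw [map_mul, hx2 k hk, hy2 k hk]⟩
  inv_mem' := by
    rintro x ⟨hx, hx2⟩
    exact ⟨inv_mem hx, fun k hk => by rw [map_inv, hx2 k hk]⟩

lemma mem_pFix {ℓ : ℕ} {φ : H →* MulAut N} {x : N} :
    x ∈ pFix ℓ φ ↔ x ∈ pTor ℓ N ∧ ∀ k : H, (∃ j : ℕ, k ^ ℓ ^ j = 1) → φ k x = x := Iff.rfl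

/-- The subgroup `M ⋊ H` of `N ⋊[φ] H`, for a `φ`-invariant subgroup `M ≤ N`. -/
def Ksub (φ : H →* MulAut N) (M : Subgroup N)
    (hinv : ∀ (k : H) (x : N), x ∈ M → φ k x ∈ M) : Subgroup (N ⋊[φ] H) where
  carrier := {σ | σ.left ∈ M}
  one_mem' := by
    show (1 : N ⋊[φ] H).left ∈ M
    rw [one_left]; exact M.one_mem
  mul_mem' := by
    intro σ τ hσ hτ
    show (σ * τ).left ∈ M
    rw [mul_left]; exact M.mul_mem hσ (hinv _ _ hτ)
  inv_mem' := by
    intro σ hσ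
    show σ⁻¹.left ∈ M
    rw [inv_left]; exact hinv _ _ (M.inv_mem hσ)

lemma mem_Ksub {φ : H →* MulAut N} {M : Subgroup N}
    {hinv : ∀ (k : H) (x : N), x ∈ M → φ k x ∈ M} {σ : N ⋊[φ] H} :
    σ ∈ Ksub φ M hinv ↔ σ.left ∈ M := Iff.rfl

lemma conj_right (φ : H →* MulAut N) (π σ : N ⋊[φ] H) : (π * σ * π⁻¹).right = σ.right := by
  rw [mul_right, mul_right, inv_right, mul_comm π.right, mul_assoc, mul_inv_cancel, mul_one]

lemma conj_left (φ : H →* MulAut N) (π σ : N ⋊[φ] H) :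
    (π * σ * π⁻¹).left = π.left * φ π.right σ.left * φ σ.right π.left⁻¹ := by
  rw [mul_left, mul_left, inv_left, mul_right, ← MulAut.mul_apply, ← map_mul]
  have h1 : π.right * σ.right * π.right⁻¹ = σ.right := by
    rw [mul_comm π.right, mul_assoc, mul_inv_cancel, mul_one]
  rw [h1]

lemma mem_range_inr (φ : H →* MulAut N) (σ : N ⋊[φ] H) :
    σ ∈ (inr : H →* N ⋊[φ] H).range ↔ σ.left = 1 := by
  constructor
  · rintro ⟨k, rfl⟩; rfl
  · intro h1
    exact ⟨σ.right, by ext <;> simp [h1]⟩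

lemma right_pow {φ : H →* MulAut N} (σ : N ⋊[φ] H) (j : ℕ) : (σ ^ j).right = σ.right ^ j := by
  induction j with
  | zero => rw [pow_zero, pow_zero, one_right]
  | succ j ih => rw [pow_succ, pow_succ, mul_right, ih]

lemma left_pow {φ : H →* MulAut N} (σ : N ⋊[φ] H) (j : ℕ) :
    (σ ^ j).left = ∏ i ∈ Finset.range j, φ (σ.right ^ i) σ.left := by
  induction j with
  | zero => rw [pow_zero, one_left, Finset.range_zero, Finset.prod_empty]
  | succ j ih => rw [pow_succ, mul_left, ih, right_pow, Finset.prod_range_succ]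

lemma telescope (g : MulAut N) (x : N) (k : ℕ) :
    x ^ k * g (∏ i ∈ Finset.range k, ∏ j ∈ Finset.range i, (g ^ j) x)
      = (∏ i ∈ Finset.range k, ∏ j ∈ Finset.range i, (g ^ j) x)
        * ∏ j ∈ Finset.range k, (g ^ j) x := by
  set S : ℕ → N := fun i => ∏ j ∈ Finset.range i, (g ^ j) x with hS
  have hstep : ∀ i, x * g (S i) = S (i + 1) := by
    intro i
    have h1 : g (S i) = ∏ j ∈ Finset.range i, (g ^ (j + 1)) x := by
      rw [hS, map_prod]
      exact Finset.prod_congr rfl fun j _ => by rw [pow_succ', MulAut.mul_apply]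
    have h2 : S (i + 1) = (∏ j ∈ Finset.range i, (g ^ (j + 1)) x) * (g ^ 0) x :=
      Finset.prod_range_succ' _ _
    rw [h1, h2, pow_zero, MulAut.one_apply, mul_comm]
  have key : ∀ m, x ^ m * g (∏ i ∈ Finset.range m, S i)
      = (∏ i ∈ Finset.range m, S i) * S m := by
    intro m
    induction m with
    | zero => simp [hS]
    | succ k ih =>
      rw [Finset.prod_range_succ, pow_succ, map_mul]
      calc x ^ k * x * (g (∏ i ∈ Finset.range k, S i) * g (S k))
          = (x ^ k * g (∏ i ∈ Finset.range k, S i)) * (x * g (S k)) :=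
            mul_mul_mul_comm _ _ _ _
        _ = ((∏ i ∈ Finset.range k, S i) * S k) * S (k + 1) := by rw [ih, hstep]
  exact key k

lemma exists_eq_mul_inv {N : Type*} [CommGroup N] [Finite N] (g : MulAut N) (ℓ : ℕ) (x : N)
    (hn : ∏ i ∈ Finset.range ℓ, (g ^ i) x = 1) (hc : Nat.Coprime ℓ (orderOf x)) :
    ∃ y : N, x = y * (g y)⁻¹ := by
  have ht := telescope g x ℓ
  rw [hn, mul_one] at ht
  set W := ∏ i ∈ Finset.range ℓ, ∏ j ∈ Finset.range i, (g ^ j) x with hW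
  have hxℓ : x ^ ℓ = W * (g W)⁻¹ := eq_mul_inv_of_mul_eq ht
  have hd : 0 < (orderOf x).totient := Nat.totient_pos.mpr (orderOf_pos x)
  set s : ℕ := ℓ ^ ((orderOf x).totient - 1) with hs
  have hls : ℓ * s = ℓ ^ (orderOf x).totient := by
    rw [hs, ← pow_succ']
    congr 1
    omega
  have hx1 : x ^ (ℓ * s) = x := by
    nth_rewrite 2 [← pow_one x]
    rw [pow_eq_pow_iff_modEq, hls]
    exact Nat.ModEq.pow_totient hc
  refine ⟨W ^ s, ?_⟩
  calc x = x ^ (ℓ * s) := hx1.symm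
    _ = (x ^ ℓ) ^ s := by rw [pow_mul]
    _ = (W * (g W)⁻¹) ^ s := by rw [hxℓ]
    _ = W ^ s * (g (W ^ s))⁻¹ := by rw [mul_pow, inv_pow, map_pow]

lemma exists_fixed_elem {N H : Type*} [CommGroup N] [CommGroup H] [Finite N] [Finite H]
    {ℓ : ℕ} (hℓ : ℓ.Prime) (φ : H →* MulAut N) (X : Subgroup N)
    (hXp : ∀ x ∈ X, ∃ m : ℕ, x ^ ℓ ^ m = 1)
    (hXinv : ∀ (k : H) (x : N), x ∈ X → φ k x ∈ X)
    (hXnt : ∃ x ∈ X, x ≠ 1) :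
    ∃ c ∈ X, c ≠ 1 ∧ ∀ k : H, (∃ j : ℕ, k ^ ℓ ^ j = 1) → φ k c = c := by
  haveI : Fact ℓ.Prime := ⟨hℓ⟩
  set Q : Subgroup H := pTor ℓ H with hQdef
  letI : MulAction Q X :=
    { smul := fun q x => ⟨φ (q : H) (x : N), hXinv q x x.2⟩
      one_smul := fun x => Subtype.ext (by
        show φ ((1 : Q) : H) (x : N) = x
        rw [OneMemClass.coe_one, map_one, MulAut.one_apply])
      mul_smul := fun q r x => Subtype.ext (by
        show φ ((q * r : Q) : H) (x : N) = φ (q : H) (φ (r : H) (x : N))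
        rw [Subgroup.coe_mul, map_mul, MulAut.mul_apply]) }
  have hsmul : ∀ (q : Q) (x : X), ((q • x : X) : N) = φ (q : H) (x : N) := fun _ _ => rfl
  have hQ : IsPGroup ℓ Q := by
    intro q
    obtain ⟨j, hj⟩ := q.2
    exact ⟨j, Subtype.ext (by rw [SubgroupClass.coe_pow]; exact hj)⟩
  have hX : IsPGroup ℓ X := by
    intro x
    obtain ⟨m, hm⟩ := hXp (x : N) x.2
    exact ⟨m, Subtype.ext (by rw [SubgroupClass.coe_pow]; exact hm)⟩
  obtain ⟨x₀, hx₀X, hx₀⟩ := hXnt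
  haveI : Nontrivial X := ⟨⟨⟨x₀, hx₀X⟩, 1, fun e => hx₀ (by
    have := congrArg (Subtype.val : X → N) e
    simpa using this)⟩⟩
  obtain ⟨n, hn0, hcard⟩ := hX.nontrivial_iff_card.mp inferInstance
  have hdvd : ℓ ∣ Nat.card X := hcard ▸ dvd_pow_self ℓ hn0.ne'
  have h1fix : (1 : X) ∈ MulAction.fixedPoints Q X := by
    intro q
    exact Subtype.ext (by rw [hsmul]; simp)
  obtain ⟨c, hcfix, hcne⟩ := hQ.exists_fixed_point_of_prime_dvd_card_of_fixed_point _ hdvd h1fix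
  refine ⟨(c : N), c.2, ?_, ?_⟩
  · intro e
    exact hcne (Subtype.ext (by simpa using e.symm))
  · intro k hk
    have := hcfix ⟨k, hk⟩
    have h2 := congrArg (Subtype.val : X → N) this
    rw [hsmul] at h2
    exact h2

lemma decomp {N : Type*} [CommGroup N] [Finite N] {ℓ : ℕ} (hℓ : ℓ.Prime) (n : N) :
    ∃ a b : N, n = a * b ∧ (∃ e : ℕ, a ^ ℓ ^ e = 1) ∧ Nat.Coprime ℓ (orderOf b) ∧
      ∃ s : ℕ, b = n ^ s := by
  set d := orderOf n with hd
  have hdpos : 0 < d := orderOf_pos n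
  set e := d.factorization ℓ with he
  set P := ℓ ^ e with hP
  set r := ordCompl[ℓ] d with hr
  have hPr : P * r = d := Nat.ordProj_mul_ordCompl_eq_self d ℓ
  have hrpos : 0 < r := Nat.ordCompl_pos ℓ hdpos.ne'
  have hPpos : 0 < P := pow_pos hℓ.pos e
  have hcop : Nat.Coprime ℓ r := Nat.coprime_ordCompl hℓ hdpos.ne'
  have hcopPr : Nat.Coprime P r := Nat.Coprime.pow_left e hcop
  set s := P ^ r.totient with hs
  set t := r ^ P.totient with ht
  have hPs : P ∣ s := dvd_pow_self P (Nat.totient_pos.mpr hrpos).ne'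
  have hrt : r ∣ t := dvd_pow_self r (Nat.totient_pos.mpr hPpos).ne'
  refine ⟨n ^ t, n ^ s, ?_, ⟨e, ?_⟩, ?_, s, rfl⟩
  · rw [← pow_add]
    nth_rewrite 1 [← pow_one n]
    rw [pow_eq_pow_iff_modEq, ← hd, ← hPr]
    rw [← Nat.modEq_and_modEq_iff_modEq_mul hcopPr]
    constructor
    · have h1 : t ≡ 1 [MOD P] := Nat.ModEq.pow_totient hcopPr.symm
      have h2 : s ≡ 0 [MOD P] := (Nat.modEq_zero_iff_dvd).mpr hPs
      simpa using (h1.add h2).symm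
    · have h1 : t ≡ 0 [MOD r] := (Nat.modEq_zero_iff_dvd).mpr hrt
      have h2 : s ≡ 1 [MOD r] := Nat.ModEq.pow_totient hcopPr
      simpa using (h1.add h2).symm
  · rw [← hP, ← pow_mul, ← orderOf_dvd_iff_pow_eq_one, ← hd, ← hPr, mul_comm t P]
    exact mul_dvd_mul_left P hrt
  · have hbr : (n ^ s) ^ r = 1 := by
      rw [← pow_mul, ← orderOf_dvd_iff_pow_eq_one, ← hd, ← hPr]
      exact mul_dvd_mul_right hPs r
    exact Nat.Coprime.coprime_dvd_right (orderOf_dvd_of_pow_eq_one hbr) hcop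

end Stmt18Aux

/-- Let `G = N ⋊_φ H` with `N`, `H` finite abelian. If for every `h ∈ H` of
order `ℓ`, `φ(h)` being the identity on all elements of `ℓ`-power order of `N`
(the Sylow `ℓ`-subgroup) implies `φ(h)` is the identity on `N`, then `G/H` is
`ℓ`-divisible with `δ_ℓ(G/H) ≤ 2`. -/
theorem stmt18 {N H : Type*} [CommGroup N] [CommGroup H] [Finite N] [Finite H]
    (ℓ : ℕ) (hℓ : ℓ.Prime) (φ : H →* MulAut N)
    (hyp : ∀ h : H, orderOf h = ℓ →
      (∀ x : N, (∃ m : ℕ, orderOf x = ℓ ^ m) → φ h x = x) →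
      ∀ x : N, φ h x = x) :
    LDiv ℓ (SemidirectProduct.inr : H →* N ⋊[φ] H).range 2 := by
  classical
  open SemidirectProduct Stmt18Aux in
  set M₁ : Subgroup N := Stmt18Aux.pTor ℓ N with hM₁def
  have hM₁inv : ∀ (k : H) (x : N), x ∈ M₁ → φ k x ∈ M₁ := by
    rintro k x ⟨m, hm⟩
    exact ⟨m, by rw [← map_pow, hm, map_one]⟩
  have hM₂inv : ∀ (k : H) (x : N), x ∈ Stmt18Aux.pFix ℓ φ → φ k x ∈ Stmt18Aux.pFix ℓ φ := by
    rintro k x ⟨hx1, hx2⟩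
    refine ⟨hM₁inv k x hx1, fun k' hk' => ?_⟩
    rw [← MulAut.mul_apply, ← map_mul, mul_comm, map_mul, MulAut.mul_apply, hx2 k' hk']
  refine ⟨![Stmt18Aux.Ksub φ M₁ hM₁inv, Stmt18Aux.Ksub φ (Stmt18Aux.pFix ℓ φ) hM₂inv], ?_, ?_⟩
  · intro i
    rintro σ ⟨k, rfl⟩
    fin_cases i
    · exact show ((SemidirectProduct.inr k : N ⋊[φ] H)).left ∈ M₁ from M₁.one_mem
    · exact show ((SemidirectProduct.inr k : N ⋊[φ] H)).left ∈ Stmt18Aux.pFix ℓ φ from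
        (Stmt18Aux.pFix ℓ φ).one_mem
  · intro σ hσH hσord
    have hσpow : σ ^ ℓ = 1 := by rw [← hσord]; exact pow_orderOf_eq_one σ
    have hn1 : σ.left ≠ 1 := fun e => hσH ((Stmt18Aux.mem_range_inr φ σ).mpr e)
    have hhℓ : σ.right ^ ℓ = 1 := by
      have := congrArg SemidirectProduct.right hσpow
      rw [Stmt18Aux.right_pow] at this
      exact this
    have hnorm : ∏ i ∈ Finset.range ℓ, (φ σ.right ^ i) σ.left = 1 := by
      have := congrArg SemidirectProduct.left hσpow
      rw [Stmt18Aux.left_pow] at this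
      simpa [map_pow] using this
    set h : H := σ.right with hh
    set n : N := σ.left with hn
    set f : N →* N := MonoidHom.mk' (fun x => x * (φ h x)⁻¹) (fun x y => by
      show x * y * (φ h (x * y))⁻¹ = x * (φ h x)⁻¹ * (y * (φ h y)⁻¹)
      rw [map_mul, mul_inv]
      exact mul_mul_mul_comm _ _ _ _) with hfdef
    have hfapp : ∀ x : N, f x = x * (φ h x)⁻¹ := fun x => rfl
    have hfswap : ∀ (k : H) (x : N), f (φ k x) = φ k (f x) := by
      intro k x
      have hsw : φ h (φ k x) = φ k (φ h x) := by
        rw [← MulAut.mul_apply, ← map_mul, mul_comm, map_mul, MulAut.mul_apply]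
      rw [hfapp, hfapp, map_mul, map_inv, hsw]
    have hfM₁ : ∀ x ∈ M₁, f x ∈ M₁ := fun x hx =>
      (by rw [hfapp]; exact M₁.mul_mem hx (M₁.inv_mem (hM₁inv h x hx)))
    obtain ⟨a, b, hab, ⟨e, hae⟩, hbcop, s, hbs⟩ := Stmt18Aux.decomp hℓ n
    have haM₁ : a ∈ M₁ := ⟨e, hae⟩
    have hbnorm : ∏ i ∈ Finset.range ℓ, (φ h ^ i) b = 1 := by
      rw [hbs]
      calc ∏ i ∈ Finset.range ℓ, (φ h ^ i) (n ^ s)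
          = ∏ i ∈ Finset.range ℓ, ((φ h ^ i) n) ^ s :=
            Finset.prod_congr rfl fun i _ => map_pow _ _ _
        _ = (∏ i ∈ Finset.range ℓ, (φ h ^ i) n) ^ s := Finset.prod_pow _ _ _
        _ = 1 := by rw [hnorm, one_pow]
    obtain ⟨y, hy⟩ := Stmt18Aux.exists_eq_mul_inv (φ h) ℓ b hbnorm hbcop
    have hfy : f y = b := by rw [hfapp]; exact hy.symm
    by_cases hA : ∃ t ∈ M₁, f t = a
    · -- Case B : a lies in f(M₁); use the second subgroup
      obtain ⟨t, htM, hft⟩ := hA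
      have hnft : f (t * y) = n := by rw [map_mul, hft, hfy, hab]
      have hty : φ h (t * y) ≠ t * y := by
        intro e'
        apply hn1
        rw [← hnft, hfapp, e', mul_inv_cancel]
      have hhne : orderOf h = ℓ := by
        rcases (Nat.dvd_prime hℓ).mp (orderOf_dvd_of_pow_eq_one hhℓ) with h1 | h1
        · exact absurd (by rw [orderOf_eq_one_iff.mp h1, map_one, MulAut.one_apply]) hty
        · exact h1
      have hnot : ¬ ∀ x : N, (∃ m : ℕ, orderOf x = ℓ ^ m) → φ h x = x := fun hall =>
        hty (hyp h hhne hall (t * y))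
      push_neg at hnot
      obtain ⟨x₀, hx₀ord, hx₀⟩ := hnot
      have hx₀M₁ : x₀ ∈ M₁ := by
        obtain ⟨m₀, hm₀⟩ := hx₀ord
        exact ⟨m₀, by rw [← hm₀]; exact pow_orderOf_eq_one x₀⟩
      have hXnt : ∃ x ∈ M₁.map f, x ≠ 1 := by
        refine ⟨f x₀, ⟨x₀, hx₀M₁, rfl⟩, fun e' => hx₀ ?_⟩
        rw [hfapp] at e'
        exact (mul_inv_eq_one.mp e').symm
      have hXp : ∀ x ∈ M₁.map f, ∃ m : ℕ, x ^ ℓ ^ m = 1 := by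
        rintro x ⟨z, hz, rfl⟩
        exact hfM₁ z hz
      have hXinv : ∀ (k : H) (x : N), x ∈ M₁.map f → φ k x ∈ M₁.map f := by
        rintro k x ⟨z, hz, rfl⟩
        exact ⟨φ k z, hM₁inv k z hz, hfswap k z⟩
      obtain ⟨c, hcX, hc1, hcfix⟩ := Stmt18Aux.exists_fixed_elem hℓ φ (M₁.map f) hXp hXinv hXnt
      have hcM₂ : c ∈ Stmt18Aux.pFix ℓ φ := ⟨hXp c hcX, hcfix⟩
      obtain ⟨z, hzM, hzc⟩ := hcX
      set w : N := z * (t * y)⁻¹ with hw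
      have hfw : f w = c * n⁻¹ := by rw [hw, map_mul, map_inv, hzc, hnft]
      refine ⟨1, SemidirectProduct.inl w * σ * (SemidirectProduct.inl w)⁻¹,
        isConj_iff.mpr ⟨_, rfl⟩, ?_, ?_⟩
      · show (SemidirectProduct.inl w * σ * (SemidirectProduct.inl w)⁻¹) ∈
          Stmt18Aux.Ksub φ (Stmt18Aux.pFix ℓ φ) hM₂inv
        rw [Stmt18Aux.mem_Ksub, Stmt18Aux.conj_left]
        have : w * φ (SemidirectProduct.inl w : N ⋊[φ] H).right n * φ h w⁻¹ = c := by
          rw [show (SemidirectProduct.inl w : N ⋊[φ] H).right = 1 from rfl, map_one,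
            MulAut.one_apply, map_inv]
          calc w * n * (φ h w)⁻¹ = w * (φ h w)⁻¹ * n := by
                rw [mul_assoc, mul_comm n, ← mul_assoc]
            _ = f w * n := by rw [hfapp]
            _ = c * n⁻¹ * n := by rw [hfw]
            _ = c := by rw [mul_assoc, inv_mul_cancel, mul_one]
        rw [show (SemidirectProduct.inl w : N ⋊[φ] H).left = w from rfl, this]
        exact hcM₂
      · intro π hπ hmem
        rw [Stmt18Aux.mem_range_inr, Stmt18Aux.conj_left, Stmt18Aux.conj_left,
          Stmt18Aux.conj_right] at hmem
        rw [show (SemidirectProduct.inl w : N ⋊[φ] H).right = 1 from rfl, map_one,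
          MulAut.one_apply, show (SemidirectProduct.inl w : N ⋊[φ] H).left = w from rfl] at hmem
        -- hmem : π.left * φ π.right (w * n * φ h w⁻¹) * φ h π.left⁻¹ = 1
        have hτl : w * n * φ h w⁻¹ = c := by
          rw [map_inv]
          calc w * n * (φ h w)⁻¹ = w * (φ h w)⁻¹ * n := by
                rw [mul_assoc, mul_comm n, ← mul_assoc]
            _ = f w * n := by rw [hfapp]
            _ = c * n⁻¹ * n := by rw [hfw]
            _ = c := by rw [mul_assoc, inv_mul_cancel, mul_one]
        rw [hτl] at hmem
        have hπM₂ : π.left ∈ Stmt18Aux.pFix ℓ φ := hπ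
        have hπfix : φ h π.left = π.left :=
          hπM₂.2 h ⟨1, by rw [pow_one]; exact hhℓ⟩
        rw [map_inv, hπfix] at hmem
        have : φ π.right c = 1 := by
          have h2 : π.left * (φ π.right c * π.left⁻¹) = 1 := by rw [← mul_assoc]; exact hmem
          have h3 : φ π.right c * π.left⁻¹ = π.left⁻¹ := eq_inv_of_mul_eq_one_right h2
          exact mul_right_cancel (h3.trans (one_mul π.left⁻¹).symm)
        exact hc1 ((φ π.right).injective (by rw [this, map_one]))
    · -- Case A : a is not in f(M₁); use the first subgroup
      refine ⟨0, SemidirectProduct.inl y⁻¹ * σ * (SemidirectProduct.inl y⁻¹)⁻¹,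
        isConj_iff.mpr ⟨_, rfl⟩, ?_, ?_⟩
      all_goals
        have hτl : y⁻¹ * n * φ h (y⁻¹)⁻¹ = a := by
          rw [inv_inv, hab, hy]
          rw [mul_left_comm a y ((φ h y)⁻¹), inv_mul_cancel_left, inv_mul_cancel_right]
      · show (SemidirectProduct.inl y⁻¹ * σ * (SemidirectProduct.inl y⁻¹)⁻¹) ∈
          Stmt18Aux.Ksub φ M₁ hM₁inv
        rw [Stmt18Aux.mem_Ksub, Stmt18Aux.conj_left]
        rw [show (SemidirectProduct.inl y⁻¹ : N ⋊[φ] H).right = 1 from rfl, map_one,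
          MulAut.one_apply, show (SemidirectProduct.inl y⁻¹ : N ⋊[φ] H).left = y⁻¹ from rfl]
        rw [hτl]
        exact haM₁
      · intro π hπ hmem
        rw [Stmt18Aux.mem_range_inr, Stmt18Aux.conj_left, Stmt18Aux.conj_left,
          Stmt18Aux.conj_right] at hmem
        rw [show (SemidirectProduct.inl y⁻¹ : N ⋊[φ] H).right = 1 from rfl, map_one,
          MulAut.one_apply, show (SemidirectProduct.inl y⁻¹ : N ⋊[φ] H).left = y⁻¹ from rfl,
          hτl] at hmem
        -- hmem : π.left * φ π.right a * φ h π.left⁻¹ = 1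
        apply hA
        set m : N := π.left with hm
        set k : H := π.right with hk
        have hmM : m ∈ M₁ := hπ
        have hkk : ∀ x : N, φ k (φ k⁻¹ x) = x := fun x => by
          rw [← MulAut.mul_apply, ← map_mul, mul_inv_cancel, map_one, MulAut.one_apply]
        refine ⟨φ k⁻¹ m⁻¹, hM₁inv _ _ (M₁.inv_mem hmM), ?_⟩
        apply (φ k).injective
        rw [← hfswap, hkk]
        -- goal : f m⁻¹ = φ k a
        have h2 : φ k a * φ h m⁻¹ = m⁻¹ := by
          rw [mul_assoc] at hmem
          exact eq_inv_of_mul_eq_one_right hmem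
        have h3 : φ k a = m⁻¹ * (φ h m⁻¹)⁻¹ := eq_mul_inv_of_mul_eq h2
        rw [hfapp, h3]
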